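/- Every faithful representation of B(1,2) into the affine group of the real line sends a to a nontrivial translation x ↦ x + α (α ≠ 0) and b to x ↦ 2x + β for some β ∈ ℝ. -/

import Mathlib

/-- The single relation b·a·b⁻¹·(a²)⁻¹ defining the Baumslag–Solitar group B(1,2),
with `false` playing the role of `a` and `true` that of `b`. -/
def bsRels : Set (FreeGroup Bool) :=
  {FreeGroup.of true * FreeGroup.of false * (FreeGroup.of true)⁻¹ *
    (FreeGroup.of false * FreeGroup.of false)⁻¹}

/-- The Baumslag–Solitar group B(1,2) = ⟨a, b ∣ b·a·b⁻¹ = a²⟩. -/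
abbrev BS12 : Type := PresentedGroup bsRels

/-- The generator a of B(1,2). -/
def aBS : BS12 := PresentedGroup.of false

/-- The generator b of B(1,2). -/
def bBS : BS12 := PresentedGroup.of true

section
variable {G : Type*} [Group G]

/-- A left-invariant total order on G, given as a relation. -/
def IsLeftTotalOrder (le : G → G → Prop) : Prop :=
  (∀ a, le a a) ∧ (∀ a b c, le a b → le b c → le a c) ∧
  (∀ a b, le a b → le b a → a = b) ∧ (∀ a b, le a b ∨ le b a) ∧
  (∀ f a b, le a b → le (f * a) (f * b))

/-- The strict relation associated to `le`. -/
def clt (le : G → G → Prop) (a b : G) : Prop := le a b ∧ ¬ le b a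

/-- A Conradian (C-)ordering on G. -/
def IsConradianOrder (le : G → G → Prop) : Prop :=
  IsLeftTotalOrder le ∧
  ∀ f g : G, clt le 1 f → clt le 1 g → ∃ n : ℕ, 0 < n ∧ clt le g (f * g ^ n)

end

/-- The defining relation holds in B(1,2). -/
lemma bs_rel : bBS * aBS * bBS⁻¹ = aBS * aBS := by
  have h : PresentedGroup.mk bsRels (FreeGroup.of true * FreeGroup.of false *
      (FreeGroup.of true)⁻¹ * (FreeGroup.of false * FreeGroup.of false)⁻¹) = 1 :=
    (QuotientGroup.eq_one_iff _).2 (Subgroup.subset_normalClosure rfl)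
  have h2 : bBS * aBS * bBS⁻¹ * (aBS * aBS)⁻¹ = 1 := by
    simpa [aBS, bBS, PresentedGroup.of] using h
  simpa using mul_eq_one_iff_eq_inv.1 h2

/-- Every affine equivalence of ℝ is x ↦ s x + c with s its linear coefficient. -/
lemma affine_form (e : ℝ ≃ᵃ[ℝ] ℝ) (x : ℝ) : e x = (e.linear 1) * x + e 0 := by
  have hx : e x = e.toAffineMap.linear x + e 0 := congrFun (AffineMap.decomp (e : ℝ →ᵃ[ℝ] ℝ)) x
  have h2 : (e.linear : ℝ →ₗ[ℝ] ℝ) x = x * e.linear 1 := by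
    simpa [smul_eq_mul] using (e.linear : ℝ →ₗ[ℝ] ℝ).map_smul x 1
  have h3 : e.toAffineMap.linear x = (e.linear : ℝ →ₗ[ℝ] ℝ) x := rfl
  rw [hx, h3, h2, mul_comm]

/-- The translation x ↦ x + 1. -/
noncomputable def bsT : ℝ ≃ᵃ[ℝ] ℝ := AffineEquiv.constVAdd ℝ ℝ 1

/-- The dilation x ↦ 2 x. -/
noncomputable def bsD : ℝ ≃ᵃ[ℝ] ℝ :=
  AffineEquiv.homothetyUnitsMulHom (0 : ℝ) (Units.mk0 (2:ℝ) two_ne_zero)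

lemma bsT_apply (x : ℝ) : bsT x = x + 1 := by
  simp [bsT, AffineEquiv.constVAdd, add_comm]
  exact add_comm (1:ℝ) x

lemma bsD_apply (x : ℝ) : bsD x = 2 * x := by
  simp [bsD, AffineEquiv.homothetyUnitsMulHom, AffineMap.homothety]
  show (2:ℝ) • (x -ᵥ (0:ℝ)) +ᵥ (0:ℝ) = 2 * x
  simp

lemma bs_hrel : ∀ r ∈ bsRels, FreeGroup.lift (fun b => if b then bsD else bsT) r = 1 := by
  rintro r rfl
  ext x
  simp only [map_mul, map_inv, FreeGroup.lift_apply_of, if_true, if_false]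
  show bsD (bsT (bsD⁻¹ ((bsT * bsT)⁻¹ x))) = x
  have hDinv : ∀ y : ℝ, bsD⁻¹ y = y / 2 := by
    intro y
    have : bsD (y / 2) = y := by rw [bsD_apply]; ring
    calc bsD⁻¹ y = bsD⁻¹ (bsD (y/2)) := by rw [this]
    _ = y / 2 := bsD.symm_apply_apply _
  have hTTinv : (bsT * bsT)⁻¹ x = x - 2 := by
    have : (bsT * bsT) (x - 2) = x := by
      show bsT (bsT (x-2)) = x
      rw [bsT_apply, bsT_apply]; ring
    calc (bsT * bsT)⁻¹ x = (bsT * bsT)⁻¹ ((bsT * bsT) (x-2)) := by rw [this]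
    _ = x - 2 := (bsT * bsT).symm_apply_apply _
  rw [hTTinv, hDinv, bsT_apply, bsD_apply]; ring

lemma aBS_ne_one : aBS ≠ 1 := by
  intro h
  have := congrArg (PresentedGroup.toGroup bs_hrel) h
  rw [aBS, PresentedGroup.toGroup.of, map_one] at this
  have h0 := congrArg (fun e : ℝ ≃ᵃ[ℝ] ℝ => e 0) this
  rw [show ((if false then bsD else bsT) : ℝ ≃ᵃ[ℝ] ℝ) = bsT from rfl, bsT_apply] at h0
  norm_num at h0


lemma bs_key (A B : ℝ ≃ᵃ[ℝ] ℝ) (hrel : B * A * B⁻¹ = A * A) (hA1 : A ≠ 1) :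
    ∃ α β : ℝ, α ≠ 0 ∧ (∀ x : ℝ, A x = x + α) ∧ (∀ x : ℝ, B x = 2 * x + β) := by
  have hrelx : ∀ x : ℝ, B (A (B⁻¹ x)) = A (A x) := fun x =>
    congrArg (fun e : ℝ ≃ᵃ[ℝ] ℝ => e x) hrel
  have hBinv : ∀ x : ℝ, B⁻¹ (B x) = x := fun x =>
    congrArg (fun e : ℝ ≃ᵃ[ℝ] ℝ => e x) (inv_mul_cancel B)
  obtain ⟨p, α, hp0, fA⟩ : ∃ p α : ℝ, p ≠ 0 ∧ ∀ x, A x = p * x + α := by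
    refine ⟨A.linear 1, A 0, ?_, affine_form A⟩
    intro h
    have : A.linear 1 = A.linear 0 := by rw [h, map_zero]
    exact one_ne_zero (A.linear.injective this)
  obtain ⟨s, β, hs0, fB⟩ : ∃ s β : ℝ, s ≠ 0 ∧ ∀ x, B x = s * x + β := by
    refine ⟨B.linear 1, B 0, ?_, affine_form B⟩
    intro h
    have : B.linear 1 = B.linear 0 := by rw [h, map_zero]
    exact one_ne_zero (B.linear.injective this)
  have e0 := hrelx (B 0)
  have e1 := hrelx (B 1)
  rw [hBinv 0] at e0
  rw [hBinv 1] at e1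
  rw [fB 0, fA 0, fB (p * 0 + α), fA (s * 0 + β), fA (p * (s * 0 + β) + α)] at e0
  rw [fB 1, fA 1, fB (p * 1 + α), fA (s * 1 + β), fA (p * (s * 1 + β) + α)] at e1
  -- slopes: s * p = p * p * s, hence p = p * p, hence p = 1
  have hpp : p * (p - 1) = 0 := by
    have hsp : (p - p * p) * s = 0 := by linear_combination e1 - e0
    have : p - p * p = 0 := by
      rcases mul_eq_zero.1 hsp with h | h
      · exact h
      · exact absurd h hs0
    nlinarith [this]
  have hp1 : p = 1 := by
    rcases mul_eq_zero.1 hpp with h | h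
    · exact absurd h hp0
    · linarith
  have fA' : ∀ x : ℝ, A x = x + α := fun x => by rw [fA x, hp1, one_mul]
  have hα0 : α ≠ 0 := by
    intro h
    apply hA1
    ext x
    rw [fA' x, h, add_zero]
    rfl
  have hs2 : s = 2 := by
    have h2 : (s - 2) * α = 0 := by
      rw [hp1] at e0
      linear_combination e0
    rcases mul_eq_zero.1 h2 with h | h
    · linarith
    · exact absurd h hα0
  exact ⟨α, β, hα0, fA', fun x => by rw [fB x, hs2]⟩

/-- Every faithful representation of B(1,2) in the affine group of the
real line sends a to a nontrivial translation x ↦ x + α (α ≠ 0) and b to x ↦ 2x + β. -/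
theorem BS12_affine_reps (φ : BS12 →* (ℝ ≃ᵃ[ℝ] ℝ)) (hfaith : Function.Injective φ) :
    ∃ α β : ℝ, α ≠ 0 ∧ (∀ x : ℝ, φ aBS x = x + α) ∧ (∀ x : ℝ, φ bBS x = 2 * x + β) := by
  have hrel : φ bBS * φ aBS * (φ bBS)⁻¹ = φ aBS * φ aBS := by
    have := congrArg φ bs_rel
    simpa [map_mul, map_inv] using this
  have hA1 : φ aBS ≠ 1 := by
    intro h
    exact aBS_ne_one (hfaith (h.trans (map_one φ).symm))
  exact bs_key (φ aBS) (φ bBS) hrel hA1
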